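/- (Generating function for generalized Hahn polynomials) For |yt| < 1, ∑_{n=0}^∞ h_n(x,y,a,b|q) t^n/(q;q)_n = ((xt;q)_∞/(yt;q)_∞) · ₁Φ₁(a; 0; q, bt), where h_n(x,y,a,b|q) := ∑_{k=0}^n \binom{n}{k}_q (−1)^k q^{\binom{k}{2}} b^k (a;q)_k p_{n−k}(y,x), p_m(y,x) := ∏_{j=0}^{m−1}(y − q^j x), and ₁Φ₁(a;0;q,z) := ∑_{m=0}^∞ (−1)^m q^{\binom{m}{2}} (a;q)_m z^m/(q;q)_m. -/

import Mathlib

open Finset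

noncomputable def qPoch (q a : ℂ) (n : ℕ) : ℂ := ∏ j ∈ Finset.range n, (1 - a * q ^ j)

noncomputable def qPochInf (q a : ℂ) : ℂ := ∏' j : ℕ, (1 - a * q ^ j)

noncomputable def cauchyP (q x y : ℂ) (n : ℕ) : ℂ := ∏ j ∈ Finset.range n, (x - q ^ j * y)

noncomputable def qBinom (q : ℂ) (n k : ℕ) : ℂ := qPoch q q n / (qPoch q q k * qPoch q q (n - k))

noncomputable def qDeriv (q : ℂ) (f : ℂ → ℂ) : ℂ → ℂ := fun x => (f x - f (q * x)) / x

noncomputable def qTheta (q : ℂ) (f : ℂ → ℂ → ℂ) : ℂ → ℂ → ℂ :=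
  fun x y => (f (q⁻¹ * x) y - f x (q * y)) / (q⁻¹ * x - y)

/-- `₁Φ₁(a; 0; q, z)` -/
noncomputable def phi11 (q a z : ℂ) : ℂ :=
  ∑' m : ℕ, (-1) ^ m * q ^ m.choose 2 * qPoch q a m * z ^ m / qPoch q q m

/-- generalized Cauchy polynomials `p_n(x,y,a)` -/
noncomputable def genCauchy (q a x y : ℂ) (n : ℕ) : ℂ :=
  ∑ k ∈ Finset.range (n + 1),
    qBinom q n k * (-1) ^ k * q ^ k.choose 2 * qPoch q a k * x ^ (n - k) * y ^ k

/-- generalized Hahn polynomials `h_n(x,y,a,b|q)` -/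
noncomputable def hahn (q x y a b : ℂ) (n : ℕ) : ℂ :=
  ∑ k ∈ Finset.range (n + 1),
    qBinom q n k * (-1) ^ k * q ^ k.choose 2 * b ^ k * qPoch q a k * cauchyP q y x (n - k)

open Filter Topology

section
variable {q : ℝ}

lemma geom_sum_le_aux (hq0 : 0 < q) (hq1 : q < 1) (k : ℕ) :
    ∑ j ∈ range k, q ^ j ≤ 1 / (1 - q) := by
  rw [geom_sum_eq (by intro h; rw [h] at hq1; linarith : q ≠ 1)]
  have heq : (q ^ k - 1) / (q - 1) = (1 - q ^ k) / (1 - q) := by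
    rw [← neg_div_neg_eq]; ring_nf
  rw [heq]
  have hk : (0:ℝ) ≤ q ^ k := by positivity
  gcongr
  · linarith

lemma one_sub_cast (m : ℕ) : (1:ℂ) - (q:ℂ) * (q:ℂ) ^ m = ((1 - q * q ^ m : ℝ) : ℂ) := by
  push_cast; ring

lemma one_sub_q_mul_pow_pos (hq0 : 0 < q) (hq1 : q < 1) (m : ℕ) : 0 < 1 - q * q ^ m := by
  have h1 : q * q ^ m ≤ q * 1 := by
    have : q ^ m ≤ 1 := pow_le_one₀ hq0.le hq1.le
    nlinarith
  linarith

lemma one_sub_q_mul_pow_ne (hq0 : 0 < q) (hq1 : q < 1) (m : ℕ) :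
    (1:ℂ) - (q:ℂ) * (q:ℂ) ^ m ≠ 0 := by
  rw [one_sub_cast]
  exact_mod_cast (one_sub_q_mul_pow_pos hq0 hq1 m).ne'

lemma norm_one_sub_q_mul_pow (hq0 : 0 < q) (hq1 : q < 1) (m : ℕ) :
    ‖(1:ℂ) - (q:ℂ) * (q:ℂ) ^ m‖ = 1 - q * q ^ m := by
  rw [one_sub_cast, Complex.norm_real, Real.norm_of_nonneg (one_sub_q_mul_pow_pos hq0 hq1 m).le]

lemma qPoch_succ (Q z : ℂ) (k : ℕ) :
    qPoch Q z (k + 1) = qPoch Q z k * (1 - z * Q ^ k) := Finset.prod_range_succ _ _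

lemma qPoch_qq_eq (k : ℕ) :
    qPoch (q:ℂ) (q:ℂ) k = ((∏ j ∈ range k, (1 - q * q ^ j) : ℝ) : ℂ) := by
  rw [qPoch]; push_cast; rfl

lemma qq_prod_pos (hq0 : 0 < q) (hq1 : q < 1) (k : ℕ) :
    0 < ∏ j ∈ range k, (1 - q * q ^ j) :=
  Finset.prod_pos fun j _ => one_sub_q_mul_pow_pos hq0 hq1 j

lemma qPoch_qq_ne (hq0 : 0 < q) (hq1 : q < 1) (k : ℕ) : qPoch (q:ℂ) (q:ℂ) k ≠ 0 := by
  rw [qPoch_qq_eq]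
  exact_mod_cast (qq_prod_pos hq0 hq1 k).ne'

lemma norm_qPoch_qq (hq0 : 0 < q) (hq1 : q < 1) (k : ℕ) :
    ‖qPoch (q:ℂ) (q:ℂ) k‖ = ∏ j ∈ range k, (1 - q * q ^ j) := by
  rw [qPoch_qq_eq, Complex.norm_real, Real.norm_of_nonneg (qq_prod_pos hq0 hq1 k).le]

lemma norm_qPoch_le (hq0 : 0 < q) (hq1 : q < 1) (z : ℂ) (k : ℕ) :
    ‖qPoch (q:ℂ) z k‖ ≤ Real.exp (‖z‖ / (1 - q)) := by
  rw [qPoch, norm_prod]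
  calc ∏ j ∈ range k, ‖1 - z * (q:ℂ) ^ j‖
      ≤ ∏ j ∈ range k, Real.exp (‖z‖ * q ^ j) := by
        apply Finset.prod_le_prod (fun j _ => norm_nonneg _)
        intro j _
        have h1 : ‖(1:ℂ) - z * (q:ℂ) ^ j‖ ≤ 1 + ‖z‖ * q ^ j := by
          calc ‖(1:ℂ) - z * (q:ℂ) ^ j‖ ≤ ‖(1:ℂ)‖ + ‖z * (q:ℂ) ^ j‖ := norm_sub_le _ _
            _ = 1 + ‖z‖ * q ^ j := by
                rw [norm_one, norm_mul, norm_pow, Complex.norm_real,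
                  Real.norm_of_nonneg hq0.le]
        refine h1.trans ?_
        have := Real.add_one_le_exp (‖z‖ * q ^ j)
        linarith
    _ = Real.exp (∑ j ∈ range k, ‖z‖ * q ^ j) := by rw [Real.exp_sum]
    _ ≤ Real.exp (‖z‖ / (1 - q)) := by
        apply Real.exp_le_exp.mpr
        rw [← Finset.mul_sum]
        calc ‖z‖ * ∑ j ∈ range k, q ^ j ≤ ‖z‖ * (1 / (1 - q)) := by
              have := geom_sum_le_aux hq0 hq1 k
              have hz : 0 ≤ ‖z‖ := norm_nonneg _
              nlinarith
          _ = ‖z‖ / (1 - q) := by ring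

lemma summable_norm_of_ratio {f : ℕ → ℂ} {c : ℕ → ℝ} {L : ℝ}
    (hL : L < 1) (hc : Tendsto c atTop (𝓝 L))
    (h : ∀ m, ‖f (m + 1)‖ ≤ c m * ‖f m‖) :
    Summable (fun m => ‖f m‖) := by
  obtain ⟨r, hLr, hr1⟩ := exists_between hL
  apply summable_of_ratio_norm_eventually_le hr1
  filter_upwards [hc.eventually_le_const hLr] with m hm
  rw [Real.norm_of_nonneg (norm_nonneg _), Real.norm_of_nonneg (norm_nonneg _)]
  exact (h m).trans (mul_le_mul_of_nonneg_right hm (norm_nonneg _))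

lemma qpow_tendsto (hq0 : 0 < q) (hq1 : q < 1) :
    Tendsto (fun m : ℕ => (q:ℝ) ^ m) atTop (𝓝 0) :=
  tendsto_pow_atTop_nhds_zero_of_lt_one hq0.le hq1

lemma summable_norm_phi (hq0 : 0 < q) (hq1 : q < 1) (a z : ℂ) :
    Summable (fun k =>
      ‖(-1) ^ k * (q:ℂ) ^ (k.choose 2) * qPoch (q:ℂ) a k * z ^ k / qPoch (q:ℂ) (q:ℂ) k‖) := by
  set Q : ℂ := (q:ℂ)
  set f : ℕ → ℂ :=
    fun k => (-1) ^ k * Q ^ (k.choose 2) * qPoch Q a k * z ^ k / qPoch Q Q k with hf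
  have key : ∀ k, f (k + 1) * (1 - Q * Q ^ k) = f k * ((-1) * Q ^ k * (1 - a * Q ^ k) * z) := by
    intro k
    have hC : (k + 1).choose 2 = k.choose 2 + k := by
      rw [Nat.choose_succ_succ]
      simp [Nat.choose_one_right, Nat.add_comm]
    simp only [hf]
    rw [qPoch_succ, qPoch_succ, hC, pow_add, pow_succ]
    have h1 : qPoch Q Q k ≠ 0 := qPoch_qq_ne hq0 hq1 k
    have h2 : (1:ℂ) - Q * Q ^ k ≠ 0 := one_sub_q_mul_pow_ne hq0 hq1 k
    rw [div_mul_eq_mul_div, div_eq_iff (mul_ne_zero h1 h2)]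
    field_simp
    ring
  refine summable_norm_of_ratio
    (c := fun k => q ^ k * ((1 + ‖a‖) * ‖z‖ / (1 - q))) (L := 0) one_pos ?_ ?_
  · have := (qpow_tendsto hq0 hq1).mul_const ((1 + ‖a‖) * ‖z‖ / (1 - q))
    simpa using this
  · intro k
    show ‖f (k + 1)‖ ≤ q ^ k * ((1 + ‖a‖) * ‖z‖ / (1 - q)) * ‖f k‖
    have hnorm : ‖f (k + 1)‖ * (1 - q * q ^ k) = ‖f k‖ * (q ^ k * ‖1 - a * Q ^ k‖ * ‖z‖) := by
      have := congrArg norm (key k)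
      rw [norm_mul, norm_mul, norm_one_sub_q_mul_pow hq0 hq1 k] at this
      rw [this]
      have hQ : ‖Q‖ = q := by rw [Complex.norm_real, Real.norm_of_nonneg hq0.le]
      simp only [norm_mul, norm_pow, norm_neg, norm_one, hQ]
      ring
    have hpos := one_sub_q_mul_pow_pos hq0 hq1 k
    have hbound : ‖1 - a * Q ^ k‖ ≤ 1 + ‖a‖ := by
      calc ‖(1:ℂ) - a * Q ^ k‖ ≤ ‖(1:ℂ)‖ + ‖a * Q ^ k‖ := norm_sub_le _ _
        _ = 1 + ‖a‖ * q ^ k := by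
            rw [norm_one, norm_mul, norm_pow, Complex.norm_real, Real.norm_of_nonneg hq0.le]
        _ ≤ 1 + ‖a‖ := by
            have h1 : q ^ k ≤ 1 := pow_le_one₀ hq0.le hq1.le
            have h2 : 0 ≤ ‖a‖ := norm_nonneg _
            nlinarith
    have hq' : 0 < 1 - q := by linarith
    have h1q : 1 - q ≤ 1 - q * q ^ k := by
      have h1 : q * q ^ k ≤ q := by
        have : q ^ k ≤ 1 := pow_le_one₀ hq0.le hq1.le
        nlinarith
      linarith
    have step : ‖f (k + 1)‖ = ‖f k‖ * (q ^ k * ‖1 - a * Q ^ k‖ * ‖z‖) / (1 - q * q ^ k) := by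
      rw [eq_div_iff hpos.ne']
      exact hnorm
    rw [step, div_le_iff₀ hpos]
    have hfk : 0 ≤ ‖f k‖ := norm_nonneg _
    have hzk : 0 ≤ ‖z‖ := norm_nonneg _
    have hqk : (0:ℝ) ≤ q ^ k := by positivity
    have hmid : q ^ k * ((1 + ‖a‖) * ‖z‖ / (1 - q)) * ‖f k‖ * (1 - q)
        = ‖f k‖ * (q ^ k * (1 + ‖a‖) * ‖z‖) := by
      field_simp
    have hmono : q ^ k * ((1 + ‖a‖) * ‖z‖ / (1 - q)) * ‖f k‖ * (1 - q)
        ≤ q ^ k * ((1 + ‖a‖) * ‖z‖ / (1 - q)) * ‖f k‖ * (1 - q * q ^ k) := by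
      have hcn : (0:ℝ) ≤ q ^ k * ((1 + ‖a‖) * ‖z‖ / (1 - q)) * ‖f k‖ := by positivity
      nlinarith
    have hle : ‖f k‖ * (q ^ k * ‖1 - a * Q ^ k‖ * ‖z‖) ≤ ‖f k‖ * (q ^ k * (1 + ‖a‖) * ‖z‖) := by
      gcongr
    linarith
end

section
variable {q : ℝ}

lemma cauchyP_succ (Q x y : ℂ) (m : ℕ) :
    cauchyP Q x y (m + 1) = cauchyP Q x y m * (x - Q ^ m * y) := Finset.prod_range_succ _ _

lemma normQ (hq0 : 0 < q) : ‖(q:ℂ)‖ = q := by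
  rw [Complex.norm_real, Real.norm_of_nonneg hq0.le]

lemma Qpow_tendsto (hq0 : 0 < q) (hq1 : q < 1) :
    Filter.Tendsto (fun m : ℕ => (q:ℂ) ^ m) Filter.atTop (nhds 0) := by
  apply tendsto_pow_atTop_nhds_zero_of_norm_lt_one
  rw [normQ hq0]; exact hq1

lemma summable_norm_S (hq0 : 0 < q) (hq1 : q < 1) (x y t : ℂ) (hyt : ‖y * t‖ < 1) :
    Summable (fun m => ‖cauchyP (q:ℂ) y x m * t ^ m / qPoch (q:ℂ) (q:ℂ) m‖) := by
  set Q : ℂ := (q:ℂ)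
  set f : ℕ → ℂ := fun m => cauchyP Q y x m * t ^ m / qPoch Q Q m with hf
  have key : ∀ m, f (m + 1) * (1 - Q * Q ^ m) = f m * ((y - Q ^ m * x) * t) := by
    intro m
    simp only [hf]
    rw [cauchyP_succ, qPoch_succ, pow_succ]
    have h1 : qPoch Q Q m ≠ 0 := qPoch_qq_ne hq0 hq1 m
    have h2 : (1:ℂ) - Q * Q ^ m ≠ 0 := one_sub_q_mul_pow_ne hq0 hq1 m
    rw [div_mul_eq_mul_div, div_eq_iff (mul_ne_zero h1 h2)]
    field_simp
  refine summable_norm_of_ratio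
    (c := fun m => ‖(y - Q ^ m * x) * t‖ / (1 - q * q ^ m)) (L := ‖y * t‖) hyt ?_ ?_
  · have hnum : Filter.Tendsto (fun m => ‖(y - Q ^ m * x) * t‖) Filter.atTop (nhds ‖y * t‖) := by
      have h1 : Filter.Tendsto (fun m => (y - Q ^ m * x) * t) Filter.atTop (nhds ((y - 0 * x) * t)) :=
        ((tendsto_const_nhds.sub ((Qpow_tendsto hq0 hq1).mul_const x)).mul_const t)
      have := h1.norm
      simpa using this
    have hden : Filter.Tendsto (fun m => 1 - q * q ^ m) Filter.atTop (nhds 1) := by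
      have := (tendsto_const_nhds (x := (1:ℝ))).sub ((qpow_tendsto hq0 hq1).const_mul q)
      simpa using this
    have := hnum.div hden one_ne_zero
    rw [div_one] at this
    exact this
  · intro m
    have hnorm : ‖f (m + 1)‖ * (1 - q * q ^ m) = ‖f m‖ * ‖(y - Q ^ m * x) * t‖ := by
      have := congrArg norm (key m)
      rw [norm_mul, norm_mul, norm_one_sub_q_mul_pow hq0 hq1 m] at this
      exact this
    have hpos := one_sub_q_mul_pow_pos hq0 hq1 m
    have step : ‖f (m + 1)‖ = ‖f m‖ * ‖(y - Q ^ m * x) * t‖ / (1 - q * q ^ m) := by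
      rw [eq_div_iff hpos.ne']
      exact hnorm
    rw [step]
    exact le_of_eq (by ring)

lemma summable_log (hq0 : 0 < q) (hq1 : q < 1) (z : ℂ) :
    Summable (fun j : ℕ => Complex.log (1 - z * (q:ℂ) ^ j)) := by
  apply Summable.of_norm_bounded_eventually_nat (g := fun j => 3 / 2 * ‖z‖ * q ^ j)
  · exact (summable_geometric_of_lt_one hq0.le hq1).mul_left _
  · have htd : Filter.Tendsto (fun j : ℕ => ‖z‖ * q ^ j) Filter.atTop (nhds 0) := by
      have := (qpow_tendsto hq0 hq1).const_mul ‖z‖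
      simpa using this
    filter_upwards [htd.eventually_le_const (by norm_num : (0:ℝ) < 1/2)] with j hj
    have hn : ‖-(z * (q:ℂ) ^ j)‖ ≤ 1 / 2 := by
      rw [norm_neg, norm_mul, norm_pow, normQ hq0]
      linarith
    have := Complex.norm_log_one_add_half_le_self hn
    rw [← sub_eq_add_neg] at this
    refine this.trans ?_
    rw [norm_neg, norm_mul, norm_pow, normQ hq0]
    ring_nf
    exact le_refl _

lemma one_sub_mul_pow_ne (hq0 : 0 < q) (hq1 : q < 1) {z : ℂ} (hz : ‖z‖ < 1) (j : ℕ) :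
    1 - z * (q:ℂ) ^ j ≠ 0 := by
  intro h
  have h2 : (1:ℂ) = z * (q:ℂ) ^ j := by linear_combination h
  have h3 : ‖z * (q:ℂ) ^ j‖ < 1 := by
    rw [norm_mul, norm_pow, normQ hq0]
    have h4 : q ^ j ≤ 1 := pow_le_one₀ hq0.le hq1.le
    have h5 : 0 ≤ ‖z‖ := norm_nonneg _
    nlinarith
  rw [← h2] at h3
  simp at h3

lemma qPochInf_eq_exp (hq0 : 0 < q) (hq1 : q < 1) {z : ℂ} (hz : ‖z‖ < 1) :
    qPochInf (q:ℂ) z = Complex.exp (∑' j : ℕ, Complex.log (1 - z * (q:ℂ) ^ j)) := by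
  have := Complex.cexp_tsum_eq_tprod (f := fun j => 1 - z * (q:ℂ) ^ j)
    (fun j => one_sub_mul_pow_ne hq0 hq1 hz j) (summable_log hq0 hq1 z)
  exact this.symm

lemma qPochInf_ne (hq0 : 0 < q) (hq1 : q < 1) {z : ℂ} (hz : ‖z‖ < 1) :
    qPochInf (q:ℂ) z ≠ 0 := by
  rw [qPochInf_eq_exp hq0 hq1 hz]
  exact Complex.exp_ne_zero _

lemma tendsto_qPoch (hq0 : 0 < q) (hq1 : q < 1) {z : ℂ} (hz : ‖z‖ < 1) :
    Filter.Tendsto (fun N => qPoch (q:ℂ) z N) Filter.atTop (nhds (qPochInf (q:ℂ) z)) := by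
  have hmul : Multipliable (fun j : ℕ => 1 - z * (q:ℂ) ^ j) :=
    Complex.multipliable_of_summable_log (summable_log hq0 hq1 z)
  exact hmul.hasProd.tendsto_prod_nat
end

/-- the generating function `∑ p_m(y,x) u^m/(q;q)_m` -/
noncomputable def Sf (q x y u : ℂ) : ℂ := ∑' m : ℕ, cauchyP q y x m * u ^ m / qPoch q q m

section
variable {q : ℝ}

lemma Sf_funceq (hq0 : 0 < q) (hq1 : q < 1) (x y : ℂ) {u : ℂ} (hu : ‖y * u‖ < 1) :
    (1 - y * u) * Sf (q:ℂ) x y u = (1 - x * u) * Sf (q:ℂ) x y ((q:ℂ) * u) := by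
  set Q : ℂ := (q:ℂ)
  set f : ℕ → ℂ := fun m => cauchyP Q y x m * u ^ m / qPoch Q Q m with hfdef
  set g : ℕ → ℂ := fun m => cauchyP Q y x m * (Q * u) ^ m / qPoch Q Q m with hgdef
  have hSf : Summable f := (summable_norm_S hq0 hq1 x y u hu).of_norm
  have hSg : Summable g := by
    apply (summable_norm_S hq0 hq1 x y (Q * u) ?_).of_norm
    rw [show y * (Q * u) = Q * (y * u) by ring, norm_mul, normQ hq0]
    nlinarith [norm_nonneg (y * u)]
  have key : ∀ m, (f (m + 1) - g (m + 1)) = u * y * f m - u * x * g m := by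
    intro m
    simp only [hfdef, hgdef]
    rw [cauchyP_succ, qPoch_succ, pow_succ, pow_succ]
    have h1 : qPoch Q Q m ≠ 0 := qPoch_qq_ne hq0 hq1 m
    have h2 : (1:ℂ) - Q * Q ^ m ≠ 0 := one_sub_q_mul_pow_ne hq0 hq1 m
    rw [div_sub_div_same, div_eq_iff (mul_ne_zero h1 h2)]
    field_simp
    ring
  have h0 : f 0 - g 0 = 0 := by
    simp [hfdef, hgdef, cauchyP, qPoch]
  have hdiff : Summable (fun m => f m - g m) := hSf.sub hSg
  have e1 : Sf Q x y u - Sf Q x y (Q * u) = ∑' m, (f m - g m) := by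
    rw [Summable.tsum_sub hSf hSg]; rfl
  have e2 : ∑' m, (f m - g m) = ∑' m, (f (m + 1) - g (m + 1)) := by
    rw [Summable.tsum_eq_zero_add hdiff, h0, zero_add]
  have e3 : ∑' m, (f (m + 1) - g (m + 1)) = u * y * Sf Q x y u - u * x * Sf Q x y (Q * u) := by
    calc ∑' m, (f (m + 1) - g (m + 1)) = ∑' m, (u * y * f m - u * x * g m) :=
          tsum_congr key
      _ = u * y * (∑' m, f m) - u * x * (∑' m, g m) := by
          rw [Summable.tsum_sub (hSf.mul_left _) (hSg.mul_left _), tsum_mul_left, tsum_mul_left]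
      _ = u * y * Sf Q x y u - u * x * Sf Q x y (Q * u) := rfl
  have := e1.trans (e2.trans e3)
  linear_combination this

lemma norm_y_qpow_mul (hq0 : 0 < q) (hq1 : q < 1) (y t : ℂ) (hyt : ‖y * t‖ < 1) (N : ℕ) :
    ‖y * ((q:ℂ) ^ N * t)‖ < 1 := by
  rw [show y * ((q:ℂ) ^ N * t) = (q:ℂ) ^ N * (y * t) by ring, norm_mul, norm_pow, normQ hq0]
  have h1 : q ^ N ≤ 1 := pow_le_one₀ hq0.le hq1.le
  have h2 : (0:ℝ) < q ^ N := by positivity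
  nlinarith [norm_nonneg (y * t)]

lemma Sf_iter (hq0 : 0 < q) (hq1 : q < 1) (x y t : ℂ) (hyt : ‖y * t‖ < 1) (N : ℕ) :
    qPoch (q:ℂ) (y * t) N * Sf (q:ℂ) x y t
      = qPoch (q:ℂ) (x * t) N * Sf (q:ℂ) x y ((q:ℂ) ^ N * t) := by
  set Q : ℂ := (q:ℂ)
  induction N with
  | zero => simp [qPoch]
  | succ N ih =>
    rw [qPoch_succ, qPoch_succ]
    have hFE := Sf_funceq hq0 hq1 x y (u := Q ^ N * t) (norm_y_qpow_mul hq0 hq1 y t hyt N)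
    have harg : Q * (Q ^ N * t) = Q ^ (N + 1) * t := by ring
    rw [harg] at hFE
    have e1 : qPoch Q (y * t) N * (1 - y * t * Q ^ N) * Sf Q x y t
        = (1 - y * (Q ^ N * t)) * (qPoch Q (y * t) N * Sf Q x y t) := by ring
    rw [e1, ih]
    have e2 : (1 - y * (Q ^ N * t)) * (qPoch Q (x * t) N * Sf Q x y (Q ^ N * t))
        = qPoch Q (x * t) N * ((1 - y * (Q ^ N * t)) * Sf Q x y (Q ^ N * t)) := by ring
    rw [e2, hFE]
    ring

lemma Sf_tendsto_one (hq0 : 0 < q) (hq1 : q < 1) (x y t : ℂ) (hyt : ‖y * t‖ < 1) :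
    Filter.Tendsto (fun N : ℕ => Sf (q:ℂ) x y ((q:ℂ) ^ N * t)) Filter.atTop (nhds 1) := by
  set Q : ℂ := (q:ℂ)
  have hbound := summable_norm_S hq0 hq1 x y t hyt
  have main : Filter.Tendsto (fun N : ℕ => ∑' m : ℕ, cauchyP Q y x m * (Q ^ N * t) ^ m / qPoch Q Q m)
      Filter.atTop (nhds (∑' m : ℕ, (if m = 0 then (1:ℂ) else 0))) := by
    apply tendsto_tsum_of_dominated_convergence hbound
    · intro m
      by_cases hm : m = 0
      · subst hm
        simp [cauchyP, qPoch]
      · have h1 : Filter.Tendsto (fun N : ℕ => (Q ^ N)) Filter.atTop (nhds 0) :=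
          Qpow_tendsto hq0 hq1
        have h2 : Filter.Tendsto (fun N : ℕ => cauchyP Q y x m * ((Q ^ N) ^ m * t ^ m) / qPoch Q Q m)
            Filter.atTop (nhds (cauchyP Q y x m * ((0:ℂ) ^ m * t ^ m) / qPoch Q Q m)) := by
          apply Filter.Tendsto.div_const
          apply Filter.Tendsto.const_mul
          exact (h1.pow m).mul_const _
        rw [zero_pow hm] at h2
        simp only [hm, if_neg hm]
        convert h2 using 2 with N
        · rw [mul_pow]
        · simp
    · filter_upwards with N
      intro m
      rw [norm_div, norm_div, norm_mul, norm_mul, norm_pow, norm_pow]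
      gcongr
      rw [norm_mul, norm_pow, normQ hq0]
      have h1 : q ^ N ≤ 1 := pow_le_one₀ hq0.le hq1.le
      have h2 : (0:ℝ) < q ^ N := by positivity
      nlinarith [norm_nonneg t]
  rw [tsum_ite_eq] at main
  exact main

lemma Sf_eq (hq0 : 0 < q) (hq1 : q < 1) (x y t : ℂ) (hyt : ‖y * t‖ < 1) (hxt : ‖x * t‖ < 1) :
    Sf (q:ℂ) x y t = qPochInf (q:ℂ) (x * t) / qPochInf (q:ℂ) (y * t) := by
  set Q : ℂ := (q:ℂ)
  have h1 : Filter.Tendsto (fun N => qPoch Q (y * t) N * Sf Q x y t) Filter.atTop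
      (nhds (qPochInf Q (y * t) * Sf Q x y t)) :=
    (tendsto_qPoch hq0 hq1 hyt).mul_const _
  have h2 : Filter.Tendsto (fun N : ℕ => qPoch Q (x * t) N * Sf Q x y (Q ^ N * t)) Filter.atTop
      (nhds (qPochInf Q (x * t) * 1)) :=
    (tendsto_qPoch hq0 hq1 hxt).mul (Sf_tendsto_one hq0 hq1 x y t hyt)
  have heq : (fun N => qPoch Q (y * t) N * Sf Q x y t)
      = fun N : ℕ => qPoch Q (x * t) N * Sf Q x y (Q ^ N * t) := by
    funext N
    exact Sf_iter hq0 hq1 x y t hyt N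
  rw [heq] at h1
  have := tendsto_nhds_unique h1 h2
  rw [mul_one] at this
  rw [eq_div_iff (qPochInf_ne hq0 hq1 hyt)]
  linear_combination this
end

theorem stmt17 (q : ℝ) (hq0 : 0 < q) (hq1 : q < 1) (a b x y t : ℂ)
    (hyt : ‖y * t‖ < 1) (hxt : ‖x * t‖ < 1) :
    ∑' n : ℕ, hahn (q : ℂ) x y a b n * t ^ n / qPoch (q : ℂ) (q : ℂ) n =
      qPochInf (q : ℂ) (x * t) / qPochInf (q : ℂ) (y * t) * phi11 (q : ℂ) a (b * t) := by
  have hyt' : ‖y * t‖ < 1 := by exact hyt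
  have hxt' : ‖x * t‖ < 1 := by exact hxt
  set Q : ℂ := (q:ℂ) with hQdef
  set A : ℕ → ℂ := fun k => (-1) ^ k * Q ^ (k.choose 2) * qPoch Q a k * (b * t) ^ k / qPoch Q Q k
    with hAdef
  set B : ℕ → ℂ := fun m => cauchyP Q y x m * t ^ m / qPoch Q Q m with hBdef
  have hA : Summable fun k => ‖A k‖ := summable_norm_phi hq0 hq1 a (b * t)
  have hB : Summable fun m => ‖B m‖ := summable_norm_S hq0 hq1 x y t hyt'
  have step1 : ∀ n, hahn Q x y a b n * t ^ n / qPoch Q Q n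
      = ∑ kl ∈ antidiagonal n, A kl.1 * B kl.2 := by
    intro n
    rw [Finset.Nat.sum_antidiagonal_eq_sum_range_succ_mk]
    rw [hahn, Finset.sum_mul, Finset.sum_div]
    apply Finset.sum_congr rfl
    intro k hk
    have hk' : k ≤ n := Nat.lt_succ_iff.mp (Finset.mem_range.mp hk)
    simp only [hAdef, hBdef, qBinom]
    have h1 : qPoch Q Q n ≠ 0 := qPoch_qq_ne hq0 hq1 n
    have h2 : qPoch Q Q k ≠ 0 := qPoch_qq_ne hq0 hq1 k
    have h3 : qPoch Q Q (n - k) ≠ 0 := qPoch_qq_ne hq0 hq1 (n - k)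
    have ht : t ^ n = t ^ k * t ^ (n - k) := by
      rw [← pow_add, Nat.add_sub_cancel' hk']
    rw [ht]
    field_simp
    ring
  calc ∑' n : ℕ, hahn Q x y a b n * t ^ n / qPoch Q Q n
      = ∑' n : ℕ, ∑ kl ∈ antidiagonal n, A kl.1 * B kl.2 := tsum_congr step1
    _ = (∑' k, A k) * (∑' m, B m) :=
        (tsum_mul_tsum_eq_tsum_sum_antidiagonal_of_summable_norm hA hB).symm
    _ = phi11 Q a (b * t) * Sf Q x y t := rfl
    _ = qPochInf Q (x * t) / qPochInf Q (y * t) * phi11 Q a (b * t) := by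
        rw [Sf_eq hq0 hq1 x y t hyt' hxt']
        ring
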